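/- arXiv:0710.5450 — 2 statements merged into one kernel-verified Lean document; each statement's English description precedes it below -/
import Mathlib

section
/- Let θ ∈ (1/2, 1] and set F(z) = (1 − (1−θ)z)/(1 + θz) for z ≥ 0. Let 0 < γ < γ₁ < 1. Then there exists a constant C = C(θ, γ, γ₁) > 0 such that for all integers N ≥ 2 and 0 ≤ n < N−1, all Δt > 0, all t ∈ [nΔt, (n+1)Δt], and all λ > 0, one has | F(λΔt)^{N−n−1} / (1 + θλΔt) − e^{−λ(NΔt − t)} | · λ^{(1−γ₁)/2} ≤ C Δt^{γ/2} ((N−n−1)Δt)^{−(1−γ₁+γ)/2}. -/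
open Real Finset Nat

open Real Finset Nat

lemma aux_pow_sub_pow (a b M : ℝ) (ha : |a| ≤ M) (hb : |b| ≤ M) :
    ∀ m : ℕ, |a ^ m - b ^ m| ≤ m * M ^ (m - 1) * |a - b| := by
  intro m
  induction m with
  | zero => simp
  | succ k ih =>
    have hM : 0 ≤ M := le_trans (abs_nonneg a) ha
    have hid : a ^ (k + 1) - b ^ (k + 1) = a * (a ^ k - b ^ k) + (a - b) * b ^ k := by ring
    rw [hid]
    have h1 : |a * (a ^ k - b ^ k) + (a - b) * b ^ k|
        ≤ |a| * |a ^ k - b ^ k| + |a - b| * |b| ^ k := by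
      calc |a * (a ^ k - b ^ k) + (a - b) * b ^ k|
          ≤ |a * (a ^ k - b ^ k)| + |(a - b) * b ^ k| := abs_add_le _ _
        _ = |a| * |a ^ k - b ^ k| + |a - b| * |b| ^ k := by rw [abs_mul, abs_mul, abs_pow]
    have h2 : |a| * |a ^ k - b ^ k| ≤ M * (k * M ^ (k - 1) * |a - b|) :=
      mul_le_mul ha ih (abs_nonneg _) hM
    have h3 : |a - b| * |b| ^ k ≤ |a - b| * M ^ k :=
      mul_le_mul_of_nonneg_left (pow_le_pow_left₀ (abs_nonneg _) hb k) (abs_nonneg _)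
    have h4 : M * (k * M ^ (k - 1) * |a - b|) + |a - b| * M ^ k
        ≤ (↑(k + 1)) * M ^ (k + 1 - 1) * |a - b| := by
      rcases k with _ | k'
      · simp
      · have hMk : M * M ^ k' = M ^ (k' + 1) := (pow_succ' M k').symm
        push_cast
        have key : M * (((k':ℝ) + 1) * M ^ k' * |a - b|) = ((k':ℝ) + 1) * M ^ (k' + 1) * |a - b| := by
          rw [← hMk]; ring
        linarith [key]
    linarith

lemma aux_rpow_exp_bound (p a : ℝ) (hp : 0 ≤ p) (ha : 0 < a) :
    ∃ K : ℝ, 0 < K ∧ ∀ x : ℝ, 0 ≤ x → x ^ p * Real.exp (-(a * x)) ≤ K := by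
  set n := ⌈p⌉₊ with hn
  refine ⟨1 + (n ! : ℝ) / a ^ n, by positivity, fun x hx => ?_⟩
  have hexp : (0:ℝ) < Real.exp (a * x) := Real.exp_pos _
  have hxp : x ^ p ≤ 1 + (n ! : ℝ) / a ^ n * Real.exp (a * x) := by
    rcases le_or_gt x 1 with h1 | h1
    · have hle : x ^ p ≤ 1 := Real.rpow_le_one hx h1 hp
      have : (0:ℝ) ≤ (n ! : ℝ) / a ^ n * Real.exp (a * x) := by positivity
      linarith
    · have h2 : x ^ p ≤ x ^ (n : ℝ) :=
        Real.rpow_le_rpow_of_exponent_le h1.le (Nat.le_ceil p)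
      rw [Real.rpow_natCast] at h2
      have h3 : (a * x) ^ n / n ! ≤ Real.exp (a * x) := by
        calc (a * x) ^ n / n ! ≤ ∑ i ∈ range (n + 1), (a * x) ^ i / i ! := by
              exact Finset.single_le_sum (f := fun i => (a * x) ^ i / (i ! : ℝ))
                (fun i _ => by positivity) (by simp)
          _ ≤ Real.exp (a * x) := Real.sum_le_exp_of_nonneg (by positivity) _
      have h4 : x ^ n = (a * x) ^ n / a ^ n := by
        rw [mul_pow]; field_simp
      have h5 : (a * x) ^ n ≤ (n ! : ℝ) * Real.exp (a * x) := by
        rw [div_le_iff₀ (by positivity)] at h3; linarith [h3]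
      have h6 : x ^ n ≤ (n ! : ℝ) / a ^ n * Real.exp (a * x) := by
        rw [h4]
        calc (a * x) ^ n / a ^ n ≤ (n ! : ℝ) * Real.exp (a * x) / a ^ n := by gcongr
          _ = (n ! : ℝ) / a ^ n * Real.exp (a * x) := by ring
      have : (0:ℝ) ≤ 1 := zero_le_one
      linarith
  calc x ^ p * Real.exp (-(a * x))
      ≤ (1 + (n ! : ℝ) / a ^ n * Real.exp (a * x)) * Real.exp (-(a * x)) :=
        mul_le_mul_of_nonneg_right hxp (Real.exp_pos _).le
    _ = Real.exp (-(a * x)) + (n ! : ℝ) / a ^ n := by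
        rw [add_mul, mul_assoc, ← Real.exp_add]; simp
    _ ≤ 1 + (n ! : ℝ) / a ^ n := by
        have : Real.exp (-(a * x)) ≤ 1 := Real.exp_le_one_iff.mpr (by nlinarith)
        linarith

set_option maxHeartbeats 2000000 in
lemma aux_key (θ β δ : ℝ) (hθ0 : 1 / 2 < θ) (hθ1 : θ ≤ 1)
    (hβ : 0 < β) (hβ1 : β ≤ 1) (hδ : 0 < δ) (hδ1 : δ ≤ 1)
    (F : ℝ → ℝ) (hF : ∀ z : ℝ, 0 ≤ z → F z = (1 - (1 - θ) * z) / (1 + θ * z)) :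
    ∃ C : ℝ, 0 < C ∧ ∀ m : ℕ, 1 ≤ m → ∀ z : ℝ, 0 < z →
      ∀ u : ℝ, (m : ℝ) * z ≤ u → u ≤ ((m : ℝ) + 1) * z →
      |F z ^ m / (1 + θ * z) - Real.exp (-u)| * ((m : ℝ) * z) ^ β ≤ C * (m : ℝ) ^ (-δ) := by
  have hθp : (0:ℝ) < θ := by linarith
  obtain ⟨K₁, hK₁p, hK₁⟩ := aux_rpow_exp_bound (β + δ + 1) (1/2) (by linarith) (by norm_num)
  obtain ⟨K₂, hK₂p, hK₂⟩ := aux_rpow_exp_bound (β + δ) (1/2) (by linarith) (by norm_num)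
  obtain ⟨K₄, hK₄p, hK₄⟩ := aux_rpow_exp_bound (β + δ) 1 (by linarith) (by norm_num)
  set ρ : ℝ := max (θ / (1 + θ)) ((1 - θ) / θ) with hρdef
  clear_value ρ
  have hρpos : 0 < ρ := by
    rw [hρdef]; exact lt_of_lt_of_le (by positivity) (le_max_left _ _)
  have hρ1 : ρ < 1 := by
    rw [hρdef]
    apply max_lt
    · rw [div_lt_one (by linarith)]; linarith
    · rw [div_lt_one hθp]; linarith
  set aρ : ℝ := -Real.log ρ with haρ
  clear_value aρ
  have haρp : 0 < aρ := by
    have := Real.log_neg hρpos hρ1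
    simp only [haρ]; linarith
  obtain ⟨K₃, hK₃p, hK₃⟩ := aux_rpow_exp_bound (β + δ) aρ (by linarith) haρp
  refine ⟨6 * K₁ + 2 * K₂ + 2 * K₃ + K₄, by positivity, ?_⟩
  intro m hm z hz u hu1 hu2
  have hθz : 0 < 1 + θ * z := by have := mul_pos hθp hz; linarith
  have hmR : (1:ℝ) ≤ (m:ℝ) := by exact_mod_cast hm
  have hm0 : (0:ℝ) < (m:ℝ) := by linarith
  set w : ℝ := (m:ℝ) * z with hw
  clear_value w
  have hw0 : 0 < w := by rw [hw]; exact mul_pos hm0 hz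
  have hwβ : (0:ℝ) ≤ w ^ β := Real.rpow_nonneg hw0.le β
  have hmδ : (0:ℝ) < (m:ℝ) ^ (-δ) := Real.rpow_pos_of_pos hm0 _
  set A : ℝ := Real.exp (-w) with hA
  clear_value A
  have hA0 : 0 < A := by rw [hA]; exact Real.exp_pos _
  have hFz := hF z hz.le
  have hAu : Real.exp (-u) ≤ A := by rw [hA]; exact Real.exp_le_exp.mpr (by linarith)
  rcases le_or_gt z 1 with hz1 | hz1
  · -- case z ≤ 1
    set E : ℝ := Real.exp (-(w/2)) with hE
    clear_value E
    have hE0 : 0 < E := by rw [hE]; exact Real.exp_pos _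
    have hAE : A ≤ E := by rw [hA, hE]; exact Real.exp_le_exp.mpr (by linarith)
    have hF0 : 0 ≤ F z := by
      rw [hFz]; apply div_nonneg _ hθz.le; have := mul_pos hθp hz; linarith
    have hFe : F z ≤ Real.exp (-(z/2)) := by
      have h1 : F z ≤ 1 - z/2 := by
        rw [hFz, div_le_iff₀ hθz]
        have hθz1 : θ * z ≤ 1 := by
          have h := mul_le_mul_of_nonneg_right hθ1 hz.le
          linarith
        have hprod : 0 ≤ z * (1 - θ * z) := mul_nonneg hz.le (by linarith)
        linarith [hprod]
      have h2 : 1 - z/2 ≤ Real.exp (-(z/2)) := by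
        have := Real.add_one_le_exp (-(z/2)); linarith
      linarith
    have hEz : Real.exp (-z) ≤ Real.exp (-(z/2)) := Real.exp_le_exp.mpr (by linarith)
    have hFd : |F z - Real.exp (-z)| ≤ 2 * z ^ 2 := by
      have hl : 1 - z ≤ Real.exp (-z) := by have := Real.add_one_le_exp (-z); linarith
      have hup : Real.exp (-z) ≤ 1 - z + z ^ 2 := by
        have h1 : 1 + z ≤ Real.exp z := by have := Real.add_one_le_exp z; linarith
        have h3 : Real.exp (-z) ≤ 1/(1+z) := by
          rw [Real.exp_neg, one_div]
          exact inv_anti₀ (by linarith) h1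
        have h4 : 1/(1+z) ≤ 1 - z + z ^ 2 := by
          rw [div_le_iff₀ (by linarith : (0:ℝ) < 1 + z)]; linarith [pow_nonneg hz.le 3]
        linarith
      have key : F z - Real.exp (-z)
          = (1 - (1 - θ) * z - (1 + θ * z) * Real.exp (-z)) / (1 + θ * z) := by
        rw [hFz]; field_simp
      have hml : (1 + θ * z) * (1 - z) ≤ (1 + θ * z) * Real.exp (-z) :=
        mul_le_mul_of_nonneg_left hl hθz.le
      have hmu : (1 + θ * z) * Real.exp (-z) ≤ (1 + θ * z) * (1 - z + z ^ 2) :=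
        mul_le_mul_of_nonneg_left hup hθz.le
      have hθz1 : θ * z ≤ 1 := by
        have h := mul_le_mul_of_nonneg_right hθ1 hz.le
        linarith
      have c1 : θ * z ^ 2 ≤ 1 * z ^ 2 := mul_le_mul_of_nonneg_right hθ1 (sq_nonneg z)
      have c2 : θ * z * z ^ 2 ≤ 1 * z ^ 2 := mul_le_mul_of_nonneg_right hθz1 (sq_nonneg z)
      have habs_g : |1 - (1 - θ) * z - (1 + θ * z) * Real.exp (-z)| ≤ 2 * z ^ 2 := by
        rw [abs_le]; constructor <;> linarith [c1, c2, mul_nonneg hθp.le (sq_nonneg z)]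
      rw [key, abs_div, abs_of_pos hθz]
      exact (_root_.div_le_self (abs_nonneg _) (by have := mul_pos hθp hz; linarith)).trans habs_g
    have hpow := aux_pow_sub_pow (F z) (Real.exp (-z)) (Real.exp (-(z/2)))
      (by rw [abs_of_nonneg hF0]; exact hFe)
      (by rw [abs_of_nonneg (Real.exp_pos _).le]; exact hEz) m
    have hAeq : Real.exp (-z) ^ m = A := by
      rw [← Real.exp_nat_mul, hA, hw]; ring_nf
    have hEpow : Real.exp (-(z/2)) ^ (m - 1) ≤ 3 * E := by
      rw [← Real.exp_nat_mul]
      have hc : ((m - 1 : ℕ) : ℝ) = (m:ℝ) - 1 := by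
        rw [Nat.cast_sub hm]; norm_num
      rw [hc]
      have : ((m:ℝ) - 1) * (-(z/2)) = z/2 + (-(w/2)) := by rw [hw]; ring
      rw [this, Real.exp_add]
      have h1 : Real.exp (z/2) ≤ Real.exp 1 := Real.exp_le_exp.mpr (by linarith)
      have h2 : Real.exp 1 < 3 := by
        have := Real.exp_one_lt_d9; linarith
      have h3 : Real.exp (z/2) * Real.exp (-(w/2)) ≤ 3 * Real.exp (-(w/2)) :=
        mul_le_mul_of_nonneg_right (by linarith) (Real.exp_pos _).le
      rw [hE]
      linarith
    have hFm : |F z ^ m - A| ≤ 6 * (m:ℝ) * z ^ 2 * E := by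
      rw [← hAeq]
      calc |F z ^ m - Real.exp (-z) ^ m|
          ≤ (m:ℝ) * Real.exp (-(z/2)) ^ (m - 1) * |F z - Real.exp (-z)| := hpow
        _ ≤ (m:ℝ) * (3 * E) * (2 * z ^ 2) := by
            apply mul_le_mul _ hFd (abs_nonneg _) (by positivity)
            exact mul_le_mul_of_nonneg_left hEpow hm0.le
        _ = 6 * (m:ℝ) * z ^ 2 * E := by ring
    have t1 : |F z ^ m / (1 + θ * z) - A / (1 + θ * z)| ≤ 6 * (m:ℝ) * z ^ 2 * E := by
      rw [div_sub_div_same, abs_div, abs_of_pos hθz]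
      exact (_root_.div_le_self (abs_nonneg _) (by have := mul_pos hθp hz; linarith)).trans hFm
    have t2 : |A / (1 + θ * z) - A| ≤ z * E := by
      have hid : A / (1 + θ * z) - A = -(A * (θ * z) / (1 + θ * z)) := by
        field_simp; ring
      rw [hid, abs_neg, abs_of_nonneg (by positivity)]
      have h1 : A * (θ * z) / (1 + θ * z) ≤ A * (θ * z) :=
        div_le_self (by positivity) (by have := mul_pos hθp hz; linarith)
      have h2 : A * (θ * z) ≤ A * (1 * z) :=
        mul_le_mul_of_nonneg_left (mul_le_mul_of_nonneg_right hθ1 hz.le) hA0.le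
      have h3 : A * z ≤ E * z := mul_le_mul_of_nonneg_right hAE hz.le
      linarith
    have t3 : |A - Real.exp (-u)| ≤ z * E := by
      have e1 : Real.exp (-u) = A * Real.exp (w - u) := by
        rw [hA, ← Real.exp_add]; ring_nf
      have e2 : 1 + (w - u) ≤ Real.exp (w - u) := by
        have := Real.add_one_le_exp (w - u); linarith
      rw [abs_of_nonneg (by linarith [hAu])]
      have huw : u - w ≤ z := by rw [hw]; linarith
      have p1 : A * (1 + (w - u)) ≤ A * Real.exp (w - u) :=
        mul_le_mul_of_nonneg_left e2 hA0.le
      have p2 : A * (u - w) ≤ A * z := mul_le_mul_of_nonneg_left huw hA0.le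
      have p3 : A * z ≤ E * z := mul_le_mul_of_nonneg_right hAE hz.le
      rw [e1]
      linarith
    have hd : |F z ^ m / (1 + θ * z) - Real.exp (-u)|
        ≤ 6 * (m:ℝ) * z ^ 2 * E + 2 * (z * E) := by
      calc |F z ^ m / (1 + θ * z) - Real.exp (-u)|
          ≤ |F z ^ m / (1 + θ * z) - A / (1 + θ * z)| + |A / (1 + θ * z) - Real.exp (-u)| :=
            abs_sub_le _ _ _
        _ ≤ |F z ^ m / (1 + θ * z) - A / (1 + θ * z)|
            + (|A / (1 + θ * z) - A| + |A - Real.exp (-u)|) := by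
            linarith [abs_sub_le (A / (1 + θ * z)) A (Real.exp (-u))]
        _ ≤ 6 * (m:ℝ) * z ^ 2 * E + 2 * (z * E) := by linarith
    have hzδ : z ^ ((1:ℝ) - δ) ≤ 1 := Real.rpow_le_one hz.le hz1 (by linarith)
    have hzδ0 : (0:ℝ) ≤ z ^ ((1:ℝ) - δ) := Real.rpow_nonneg hz.le _
    have hI1 : (m:ℝ) * z ^ 2 * E * w ^ β
        = z ^ ((1:ℝ) - δ) * (m:ℝ) ^ (-δ) * (w ^ (β + δ + 1) * E) := by
      rw [hw, Real.mul_rpow hm0.le hz.le, Real.mul_rpow hm0.le hz.le,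
        Real.rpow_add hm0, Real.rpow_add hm0, Real.rpow_one,
        Real.rpow_add hz, Real.rpow_add hz, Real.rpow_one,
        Real.rpow_sub hz, Real.rpow_one, Real.rpow_neg hm0.le]
      have h1 : (0:ℝ) < (m:ℝ) ^ δ := Real.rpow_pos_of_pos hm0 _
      have h2 : (0:ℝ) < z ^ δ := Real.rpow_pos_of_pos hz _
      field_simp
    have hI2 : z * E * w ^ β
        = z ^ ((1:ℝ) - δ) * (m:ℝ) ^ (-δ) * (w ^ (β + δ) * E) := by
      rw [hw, Real.mul_rpow hm0.le hz.le, Real.mul_rpow hm0.le hz.le,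
        Real.rpow_add hm0, Real.rpow_add hz,
        Real.rpow_sub hz, Real.rpow_one, Real.rpow_neg hm0.le]
      have h1 : (0:ℝ) < (m:ℝ) ^ δ := Real.rpow_pos_of_pos hm0 _
      have h2 : (0:ℝ) < z ^ δ := Real.rpow_pos_of_pos hz _
      field_simp
    have hB1 : w ^ (β + δ + 1) * E ≤ K₁ := by
      have hb := hK₁ w hw0.le
      have harg : -(1/2 * w) = -(w/2) := by ring
      rw [harg, ← hE] at hb
      exact hb
    have hB2 : w ^ (β + δ) * E ≤ K₂ := by
      have hb := hK₂ w hw0.le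
      have harg : -(1/2 * w) = -(w/2) := by ring
      rw [harg, ← hE] at hb
      exact hb
    have h1 : (m:ℝ) * z ^ 2 * E * w ^ β ≤ K₁ * (m:ℝ) ^ (-δ) := by
      rw [hI1]
      calc z ^ ((1:ℝ) - δ) * (m:ℝ) ^ (-δ) * (w ^ (β + δ + 1) * E)
          ≤ 1 * (m:ℝ) ^ (-δ) * K₁ := by
            apply mul_le_mul _ hB1 (by positivity) (by positivity)
            exact mul_le_mul_of_nonneg_right hzδ hmδ.le
        _ = K₁ * (m:ℝ) ^ (-δ) := by ring
    have h2 : z * E * w ^ β ≤ K₂ * (m:ℝ) ^ (-δ) := by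
      rw [hI2]
      calc z ^ ((1:ℝ) - δ) * (m:ℝ) ^ (-δ) * (w ^ (β + δ) * E)
          ≤ 1 * (m:ℝ) ^ (-δ) * K₂ := by
            apply mul_le_mul _ hB2 (by positivity) (by positivity)
            exact mul_le_mul_of_nonneg_right hzδ hmδ.le
        _ = K₂ * (m:ℝ) ^ (-δ) := by ring
    calc |F z ^ m / (1 + θ * z) - Real.exp (-u)| * w ^ β
        ≤ (6 * (m:ℝ) * z ^ 2 * E + 2 * (z * E)) * w ^ β :=
          mul_le_mul_of_nonneg_right hd hwβ
      _ = 6 * ((m:ℝ) * z ^ 2 * E * w ^ β) + 2 * (z * E * w ^ β) := by ring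
      _ ≤ 6 * (K₁ * (m:ℝ) ^ (-δ)) + 2 * (K₂ * (m:ℝ) ^ (-δ)) := by
          linarith [h1, h2]
      _ = (6 * K₁ + 2 * K₂) * (m:ℝ) ^ (-δ) := by ring
      _ ≤ (6 * K₁ + 2 * K₂ + 2 * K₃ + K₄) * (m:ℝ) ^ (-δ) :=
          mul_le_mul_of_nonneg_right (by linarith) hmδ.le
  · -- case z > 1
    have hρub : F z ≤ θ / (1 + θ) := by
      rw [hFz, div_le_div_iff₀ hθz (by linarith : (0:ℝ) < 1 + θ)]
      nlinarith [mul_pos hθp hz, sq_nonneg θ, mul_le_mul_of_nonneg_right (le_of_lt hz1) (sq_nonneg θ)]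
    have hρlb : -((1 - θ) / θ) ≤ F z := by
      rw [hFz, ← neg_div, div_le_div_iff₀ hθp hθz]
      nlinarith [mul_pos hθp hz]
    have hρb : |F z| ≤ ρ := by
      rw [hρdef, abs_le]
      constructor
      · have h := le_max_right (θ / (1 + θ)) ((1 - θ) / θ)
        linarith [hρlb]
      · exact hρub.trans (le_max_left _ _)
    have hρm : |F z| ^ m ≤ ρ ^ m := pow_le_pow_left₀ (abs_nonneg _) hρb m
    have hd : |F z ^ m / (1 + θ * z) - Real.exp (-u)| ≤ ρ ^ m / (θ * z) + A := by
      calc |F z ^ m / (1 + θ * z) - Real.exp (-u)|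
          ≤ |F z ^ m / (1 + θ * z)| + |Real.exp (-u)| := by
            rw [sub_eq_add_neg]
            exact (abs_add_le _ _).trans (by rw [abs_neg])
        _ ≤ ρ ^ m / (θ * z) + A := by
            apply _root_.add_le_add
            · rw [abs_div, abs_of_pos hθz, abs_pow]
              exact div_le_div₀ (pow_nonneg hρpos.le m) hρm (by positivity) (by have := mul_pos hθp hz; linarith)
            · rw [abs_of_pos (Real.exp_pos _)]; exact hAu
    have hρeq : ρ ^ m = Real.exp (-(aρ * (m:ℝ))) := by
      rw [← Real.exp_log hρpos, ← Real.exp_nat_mul]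
      congr 1
      simp only [haρ]; ring
    have hwm : (m:ℝ) ≤ w := by
      rw [hw]
      have := mul_le_mul_of_nonneg_left hz1.le hm0.le
      linarith
    have hwδ : w ^ (-δ) ≤ (m:ℝ) ^ (-δ) :=
      Real.rpow_le_rpow_of_nonpos hm0 hwm (by linarith)
    have hA' : A * w ^ β ≤ K₄ * (m:ℝ) ^ (-δ) := by
      have hid : A * w ^ β = (w ^ (β + δ) * Real.exp (-(1 * w))) * w ^ (-δ) := by
        rw [Real.rpow_add hw0, Real.rpow_neg hw0.le, one_mul, hA]
        have hδp : (0:ℝ) < w ^ δ := Real.rpow_pos_of_pos hw0 _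
        field_simp
      rw [hid]
      exact mul_le_mul (hK₄ w hw0.le) hwδ (Real.rpow_nonneg hw0.le _) hK₄p.le
    have hzβ : z ^ β ≤ z := by
      calc z ^ β ≤ z ^ (1:ℝ) := Real.rpow_le_rpow_of_exponent_le hz1.le hβ1
        _ = z := Real.rpow_one z
    have hzfrac : z ^ β / (θ * z) ≤ 2 := by
      have h1 : z ^ β / (θ * z) ≤ z / (θ * z) :=
        (div_le_div_iff_of_pos_right (by positivity)).mpr hzβ
      have h2 : z / (θ * z) = 1 / θ := by
        rw [div_eq_div_iff (by positivity : (0:ℝ) < θ * z).ne' hθp.ne']; ring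
      have h3 : 1 / θ ≤ 2 := by rw [div_le_iff₀ hθp]; linarith
      linarith
    have hρ' : ρ ^ m / (θ * z) * w ^ β ≤ 2 * (K₃ * (m:ℝ) ^ (-δ)) := by
      have hid : ρ ^ m / (θ * z) * w ^ β = (ρ ^ m * (m:ℝ) ^ β) * (z ^ β / (θ * z)) := by
        rw [hw, Real.mul_rpow hm0.le hz.le]; ring
      rw [hid]
      have hmm : ρ ^ m * (m:ℝ) ^ β ≤ K₃ * (m:ℝ) ^ (-δ) := by
        have hid2 : ρ ^ m * (m:ℝ) ^ β
            = ((m:ℝ) ^ (β + δ) * Real.exp (-(aρ * (m:ℝ)))) * (m:ℝ) ^ (-δ) := by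
          rw [hρeq, Real.rpow_add hm0, Real.rpow_neg hm0.le]
          have hδp : (0:ℝ) < (m:ℝ) ^ δ := Real.rpow_pos_of_pos hm0 _
          field_simp
        rw [hid2]
        exact mul_le_mul_of_nonneg_right (hK₃ (m:ℝ) hm0.le) hmδ.le
      calc (ρ ^ m * (m:ℝ) ^ β) * (z ^ β / (θ * z)) ≤ (K₃ * (m:ℝ) ^ (-δ)) * 2 :=
            mul_le_mul hmm hzfrac (by positivity) (by positivity)
        _ = 2 * (K₃ * (m:ℝ) ^ (-δ)) := by ring
    calc |F z ^ m / (1 + θ * z) - Real.exp (-u)| * w ^ β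
        ≤ (ρ ^ m / (θ * z) + A) * w ^ β :=
          mul_le_mul_of_nonneg_right hd hwβ
      _ = ρ ^ m / (θ * z) * w ^ β + A * w ^ β := by ring
      _ ≤ 2 * (K₃ * (m:ℝ) ^ (-δ)) + K₄ * (m:ℝ) ^ (-δ) := by linarith
      _ = (2 * K₃ + K₄) * (m:ℝ) ^ (-δ) := by ring
      _ ≤ (6 * K₁ + 2 * K₂ + 2 * K₃ + K₄) * (m:ℝ) ^ (-δ) :=
          mul_le_mul_of_nonneg_right (by linarith) hmδ.le

/-- Estimate (eq:Nn_1) of the paper (proved in the appendix): for the stability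
function `F(z) = (1-(1-θ)z)/(1+θz)` of the θ-scheme with `θ ∈ (1/2,1]` and
`0 < γ < γ₁ < 1`, there is `C > 0` such that for all integers `N ≥ 2`,
`0 ≤ n < N-1`, all `Δt > 0`, `t ∈ [nΔt, (n+1)Δt]` and `λ > 0`,
`|F(λΔt)^{N-n-1}/(1+θλΔt) - e^{-λ(NΔt-t)}| λ^{(1-γ₁)/2}
   ≤ C Δt^{γ/2} ((N-n-1)Δt)^{-(1-γ₁+γ)/2}`. -/
theorem stmt_9 (θ γ γ₁ : ℝ) (hθ0 : 1 / 2 < θ) (hθ1 : θ ≤ 1)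
    (hγ0 : 0 < γ) (hγγ₁ : γ < γ₁) (hγ₁ : γ₁ < 1)
    (F : ℝ → ℝ) (hF : ∀ z : ℝ, 0 ≤ z → F z = (1 - (1 - θ) * z) / (1 + θ * z)) :
    ∃ C : ℝ, 0 < C ∧ ∀ N : ℕ, 2 ≤ N → ∀ n : ℕ, n < N - 1 →
      ∀ Δt : ℝ, 0 < Δt → ∀ t : ℝ, n * Δt ≤ t → t ≤ (n + 1) * Δt →
      ∀ lam : ℝ, 0 < lam →
      |F (lam * Δt) ^ (N - n - 1) / (1 + θ * lam * Δt) -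
          Real.exp (-(lam * (N * Δt - t)))| * lam ^ ((1 - γ₁) / 2) ≤
        C * Δt ^ (γ / 2) * (((N - n - 1 : ℕ) : ℝ) * Δt) ^ (-(1 - γ₁ + γ) / 2) := by
  obtain ⟨C, hC, hkey⟩ := aux_key θ ((1 - γ₁) / 2) (γ / 2) hθ0 hθ1
    (by linarith) (by linarith) (by linarith) (by linarith) F hF
  refine ⟨C, hC, ?_⟩
  intro N hN n hn Δt hΔt t ht1 ht2 lam hlam
  set m : ℕ := N - n - 1 with hm
  have hm1 : 1 ≤ m := by omega
  have hmcast : ((m : ℕ) : ℝ) = (N : ℝ) - (n : ℝ) - 1 := by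
    have h1 : m + n + 1 = N := by omega
    have := congrArg (Nat.cast : ℕ → ℝ) h1
    push_cast at this
    linarith
  have hm0 : (0 : ℝ) < (m : ℝ) := by
    have : (1 : ℝ) ≤ (m : ℝ) := by exact_mod_cast hm1
    linarith
  have hz : 0 < lam * Δt := mul_pos hlam hΔt
  have hu1 : (m : ℝ) * (lam * Δt) ≤ lam * ((N : ℝ) * Δt - t) := by
    have h0 : 0 ≤ lam * (((n : ℝ) + 1) * Δt - t) := mul_nonneg hlam.le (by push_cast at ht2 ⊢; linarith)
    have h2 : lam * ((N : ℝ) * Δt - t) - (m : ℝ) * (lam * Δt)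
        = lam * (((n : ℝ) + 1) * Δt - t) := by rw [hmcast]; ring
    linarith
  have hu2 : lam * ((N : ℝ) * Δt - t) ≤ ((m : ℝ) + 1) * (lam * Δt) := by
    have h0 : 0 ≤ lam * (t - (n : ℝ) * Δt) := mul_nonneg hlam.le (by linarith)
    have h2 : ((m : ℝ) + 1) * (lam * Δt) - lam * ((N : ℝ) * Δt - t)
        = lam * (t - (n : ℝ) * Δt) := by rw [hmcast]; ring
    linarith
  have hkey' := hkey m hm1 (lam * Δt) hz (lam * ((N : ℝ) * Δt - t)) hu1 hu2
  have hassoc : 1 + θ * lam * Δt = 1 + θ * (lam * Δt) := by ring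
  rw [hassoc]
  have hS : (0 : ℝ) < (m : ℝ) * Δt := mul_pos hm0 hΔt
  have hW : (0 : ℝ) < (m : ℝ) * (lam * Δt) := mul_pos hm0 hz
  have hlameq : lam ^ ((1 - γ₁) / 2)
      = ((m : ℝ) * (lam * Δt)) ^ ((1 - γ₁) / 2) * ((m : ℝ) * Δt) ^ (-((1 - γ₁) / 2)) := by
    rw [Real.rpow_neg hS.le, ← Real.inv_rpow hS.le,
      ← Real.mul_rpow hW.le (inv_nonneg.mpr hS.le)]
    congr 1
    field_simp
  have hexp : (-(1 - γ₁ + γ) / 2 : ℝ) = -((1 - γ₁) / 2 + γ / 2) := by ring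
  rw [hexp]
  have e1 : ((m : ℝ) * Δt) ^ (-((1 - γ₁) / 2 + γ / 2))
      = ((m : ℝ) * Δt) ^ (-((1 - γ₁) / 2)) * ((m : ℝ) ^ (-(γ / 2)) * Δt ^ (-(γ / 2))) := by
    rw [show (-((1 - γ₁) / 2 + γ / 2) : ℝ) = -((1 - γ₁) / 2) + -(γ / 2) by ring,
      Real.rpow_add hS]
    rw [Real.mul_rpow hm0.le hΔt.le, Real.mul_rpow hm0.le hΔt.le]
  have e2 : Δt ^ (γ / 2) * Δt ^ (-(γ / 2)) = 1 := by
    rw [← Real.rpow_add hΔt]; norm_num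
  have hRHSeq : C * Δt ^ (γ / 2) * ((m : ℝ) * Δt) ^ (-((1 - γ₁) / 2 + γ / 2))
      = C * ((m : ℝ) ^ (-(γ / 2)) * ((m : ℝ) * Δt) ^ (-((1 - γ₁) / 2))) := by
    rw [e1]
    linear_combination (C * ((m : ℝ) * Δt) ^ (-((1 - γ₁) / 2)) * (m : ℝ) ^ (-(γ / 2))) * e2
  rw [hlameq, hRHSeq]
  have hSb : (0 : ℝ) ≤ ((m : ℝ) * Δt) ^ (-((1 - γ₁) / 2)) := Real.rpow_nonneg hS.le _
  calc |F (lam * Δt) ^ m / (1 + θ * (lam * Δt)) - Real.exp (-(lam * ((N:ℝ) * Δt - t)))|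
        * (((m : ℝ) * (lam * Δt)) ^ ((1 - γ₁) / 2) * ((m : ℝ) * Δt) ^ (-((1 - γ₁) / 2)))
      = (|F (lam * Δt) ^ m / (1 + θ * (lam * Δt)) - Real.exp (-(lam * ((N:ℝ) * Δt - t)))|
        * ((m : ℝ) * (lam * Δt)) ^ ((1 - γ₁) / 2)) * ((m : ℝ) * Δt) ^ (-((1 - γ₁) / 2)) := by
        ring
    _ ≤ (C * (m : ℝ) ^ (-(γ / 2))) * ((m : ℝ) * Δt) ^ (-((1 - γ₁) / 2)) :=
        mul_le_mul_of_nonneg_right hkey' hSb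
    _ = C * ((m : ℝ) ^ (-(γ / 2)) * ((m : ℝ) * Δt) ^ (-((1 - γ₁) / 2))) := by ring
end

section
/- Let θ ∈ (1/2, 1] and F(z) = (1 − (1−θ)z)/(1 + θz). Then there exists a constant κ = κ(θ) > 0 such that for every integer N ≥ 1, sup_{z ≥ 0} | e^{−Nz} − F(z)^N | ≤ κ / N. -/
lemma aux_pow_diff (ρ : ℝ) (hρ : 0 ≤ ρ) (a b : ℝ) (ha : |a| ≤ ρ) (hb : |b| ≤ ρ) :
    ∀ n : ℕ, |a ^ n - b ^ n| ≤ n * ρ ^ (n - 1) * |a - b| := by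
  intro n
  induction n with
  | zero => simp
  | succ m ih =>
    have key : a ^ (m+1) - b ^ (m+1) = a * (a ^ m - b ^ m) + (a - b) * b ^ m := by ring
    have h1 : |a * (a ^ m - b ^ m)| ≤ ρ * (m * ρ ^ (m - 1) * |a - b|) := by
      rw [abs_mul]
      exact mul_le_mul ha ih (abs_nonneg _) hρ
    have h2 : |(a - b) * b ^ m| ≤ |a - b| * ρ ^ m := by
      rw [abs_mul]
      exact mul_le_mul_of_nonneg_left (by rw [abs_pow]; exact pow_le_pow_left₀ (abs_nonneg _) hb m) (abs_nonneg _)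
    calc |a ^ (m+1) - b ^ (m+1)| ≤ |a * (a ^ m - b ^ m)| + |(a - b) * b ^ m| := by
          rw [key]; exact abs_add_le _ _
      _ ≤ ρ * (m * ρ ^ (m - 1) * |a - b|) + |a - b| * ρ ^ m := add_le_add h1 h2
      _ ≤ (m + 1 : ℕ) * ρ ^ ((m+1) - 1) * |a - b| := by
          rcases Nat.eq_zero_or_pos m with hm | hm
          · subst hm; simp
          · have : ρ * ρ ^ (m - 1) = ρ ^ m := by
              rw [← pow_succ']
              congr 1
              omega
            have e1 : ρ * (↑m * ρ ^ (m - 1) * |a - b|) = ↑m * ρ ^ m * |a - b| := by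
              rw [← this]; ring
            push_cast
            rw [e1]
            ring_nf
            rfl

set_option maxHeartbeats 2000000 in
/-- Rational approximation estimate (eq:time_error_det), due to Le Roux: for the
strongly A-stable θ-scheme with `θ ∈ (1/2,1]` and stability function
`F(z) = (1-(1-θ)z)/(1+θz)`, there is `κ > 0` such that for every integer `N ≥ 1`,
`sup_{z ≥ 0} |e^{-Nz} - F(z)^N| ≤ κ / N`. -/
theorem stmt_10 (θ : ℝ) (hθ0 : 1 / 2 < θ) (hθ1 : θ ≤ 1)
    (F : ℝ → ℝ) (hF : ∀ z : ℝ, 0 ≤ z → F z = (1 - (1 - θ) * z) / (1 + θ * z)) :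
    ∃ κ : ℝ, 0 < κ ∧ ∀ N : ℕ, 1 ≤ N → ∀ z : ℝ, 0 ≤ z →
      |Real.exp (-(N * z)) - F z ^ N| ≤ κ / N := by
  have hθp : (0:ℝ) < θ := by linarith
  set δ : ℝ := min (1/2) (2 - 1/θ) with hδdef
  have hinv : 1/θ < 2 := by rw [div_lt_iff₀ hθp]; linarith
  have hδ0 : 0 < δ := lt_min (by norm_num) (by linarith)
  have hδhalf : δ ≤ 1/2 := min_le_left _ _
  have hδθ : δ ≤ 2 - 1/θ := min_le_right _ _
  refine ⟨64 + 2/δ, by positivity, ?_⟩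
  intro N hN z hz
  have hNpos : (0:ℝ) < N := by exact_mod_cast hN
  have hden : (0:ℝ) < 1 + θ * z := by nlinarith
  have hFz : F z = 1 - z / (1 + θ * z) := by
    rw [hF z hz]
    field_simp
    ring
  have hκN : (0:ℝ) < (64 + 2/δ) / N := by positivity
  rcases eq_or_lt_of_le hz with hz0 | hzpos
  · -- z = 0
    subst hz0
    simp only [mul_zero, neg_zero, Real.exp_zero]
    have hF0 : F 0 = 1 := by rw [hF 0 le_rfl]; norm_num
    rw [hF0, one_pow, sub_self, abs_zero]
    exact hκN.le
  rcases le_or_gt z 1 with hz1 | hz1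
  · -- small z : 0 < z ≤ 1
    have hexp_lb : 1 - z ≤ Real.exp (-z) := by
      have := Real.add_one_le_exp (-z); linarith
    have hexp_ub : Real.exp (-z) ≤ 1 / (1 + z) := by
      have h1 : 1 + z ≤ Real.exp z := by
        have := Real.add_one_le_exp z; linarith
      rw [Real.exp_neg, le_div_iff₀ (by linarith)]
      rw [inv_mul_le_iff₀ (Real.exp_pos z)]
      linarith
    have hF_lb : 1 - z ≤ F z := by
      rw [hFz]
      have : z / (1 + θ * z) ≤ z := by
        rw [div_le_iff₀ hden]
        nlinarith [mul_nonneg (mul_nonneg hθp.le hz) hz]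
      linarith
    have hF_ub2 : F z ≤ 1 - z + z^2 := by
      rw [hFz]
      have : z - z^2 ≤ z / (1 + θ * z) := by
        rw [le_div_iff₀ hden]; nlinarith [sq_nonneg z, mul_nonneg (mul_nonneg hθp.le hz) (sq_nonneg z)]
      linarith
    have habs1 : |Real.exp (-z) - F z| ≤ z^2 := by
      have hub : 1 / (1 + z) ≤ 1 - z + z^2 := by
        rw [div_le_iff₀ (by linarith)]
        nlinarith [pow_nonneg hz 3]
      rw [abs_le]
      constructor <;> nlinarith
    have hFρ : |F z| ≤ Real.exp (-z/2) := by
      have hF0 : 0 ≤ F z := by linarith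
      have hFub : F z ≤ 1 - z/2 := by
        rw [hFz]
        have : z/2 ≤ z / (1 + θ * z) := by
          rw [div_le_div_iff₀ (by norm_num : (0:ℝ) < 2) hden]
          nlinarith [mul_le_mul_of_nonneg_left hz1 hz, mul_le_mul_of_nonneg_right hθ1 (mul_nonneg hz hz)]
        linarith
      have : 1 - z/2 ≤ Real.exp (-z/2) := by
        have := Real.add_one_le_exp (-z/2); linarith
      rw [abs_le]
      constructor
      · linarith [Real.exp_pos (-z/2)]
      · linarith
    have hEρ : |Real.exp (-z)| ≤ Real.exp (-z/2) := by
      rw [abs_of_pos (Real.exp_pos _)]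
      exact Real.exp_le_exp.2 (by linarith)
    have hkey : |Real.exp (-(N * z)) - F z ^ N| ≤
        N * Real.exp (-z/2) ^ (N - 1) * z^2 := by
      have hsplit : Real.exp (-(N * z)) = Real.exp (-z) ^ N := by
        rw [← Real.exp_nat_mul]; congr 1; ring
      rw [hsplit]
      calc |Real.exp (-z) ^ N - F z ^ N|
          ≤ N * Real.exp (-z/2) ^ (N - 1) * |Real.exp (-z) - F z| :=
            aux_pow_diff _ (Real.exp_pos _).le _ _ hEρ hFρ N
        _ ≤ N * Real.exp (-z/2) ^ (N - 1) * z^2 := by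
            apply mul_le_mul_of_nonneg_left habs1
            positivity
    rcases eq_or_lt_of_le hN with hN1 | hN2
    · -- N = 1
      subst hN1
      simp only [Nat.cast_one, pow_one, one_mul, div_one]
      have hsq : z^2 ≤ 1 := by nlinarith
      have h2δ : 0 < 2/δ := by positivity
      calc |Real.exp (-z) - F z| ≤ z^2 := habs1
        _ ≤ 64 + 2/δ := by linarith
    · -- N ≥ 2
      have hN2' : (2:ℝ) ≤ N := by exact_mod_cast hN2
      set x : ℝ := N * z / 4 with hxdef
      have hx0 : 0 < x := by positivity
      have hexpx : x^2 / 4 ≤ Real.exp x := by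
        have h1 : x/2 ≤ Real.exp (x/2) := by
          have := Real.add_one_le_exp (x/2); linarith
        have h2 : Real.exp (x/2) * Real.exp (x/2) = Real.exp x := by
          rw [← Real.exp_add]; ring_nf
        nlinarith [Real.exp_pos (x/2)]
      have hexpnx : Real.exp (-x) ≤ 4 / x^2 := by
        rw [Real.exp_neg]
        have h4 : 0 < x^2/4 := by positivity
        calc (Real.exp x)⁻¹ ≤ (x^2/4)⁻¹ := inv_anti₀ h4 hexpx
          _ = 4 / x^2 := by rw [inv_div]
      have hpow : Real.exp (-z/2) ^ (N - 1) ≤ Real.exp (-x) := by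
        rw [← Real.exp_nat_mul]
        apply Real.exp_le_exp.2
        have hc : ((N - 1 : ℕ) : ℝ) = (N : ℝ) - 1 := by
          have h1 : 1 ≤ N := hN
          push_cast [h1]
          ring
        rw [hc, hxdef]
        nlinarith
      have hfin : (N:ℝ) * Real.exp (-x) * z^2 ≤ (64:ℝ) / N := by
        have heq : (N:ℝ) * (4 / x^2) * z^2 = (64:ℝ) / N := by
          rw [hxdef]
          field_simp
          ring
        calc (N:ℝ) * Real.exp (-x) * z^2 ≤ (N:ℝ) * (4 / x^2) * z^2 := by
              apply mul_le_mul_of_nonneg_right _ (sq_nonneg z)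
              exact mul_le_mul_of_nonneg_left hexpnx hNpos.le
          _ = (64:ℝ) / N := heq
      have h64 : (64:ℝ) / N ≤ (64 + 2/δ) / N := by
        apply (div_le_div_iff_of_pos_right hNpos).2
        have : 0 < 2/δ := by positivity
        linarith
      calc |Real.exp (-(N * z)) - F z ^ N|
          ≤ N * Real.exp (-z/2) ^ (N - 1) * z^2 := hkey
        _ ≤ N * Real.exp (-x) * z^2 := by
            apply mul_le_mul_of_nonneg_right _ (sq_nonneg z)
            exact mul_le_mul_of_nonneg_left hpow hNpos.le
        _ ≤ (64:ℝ) / N := hfin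
        _ ≤ (64 + 2/δ) / N := h64
  · -- large z : z ≥ 1
    have hg_lb : 1/2 ≤ z / (1 + θ * z) := by
      rw [div_le_div_iff₀ (by norm_num : (0:ℝ) < 2) hden]
      nlinarith [mul_le_mul_of_nonneg_right hθ1 hz]
    have hg_ub : z / (1 + θ * z) ≤ 1/θ := by
      rw [div_le_div_iff₀ hden hθp]
      nlinarith
    have hFr : |F z| ≤ 1 - δ := by
      rw [hFz, abs_le]
      constructor
      · linarith
      · linarith
    have hexpz : Real.exp (-(N * z)) ≤ 1 / N := by
      have h1 : (N:ℝ) ≤ Real.exp N := by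
        have := Real.add_one_le_exp (N:ℝ); linarith
      have h2 : Real.exp (-(N * z)) ≤ Real.exp (-(N:ℝ)) := by
        apply Real.exp_le_exp.2
        nlinarith
      have h3 : Real.exp (-(N:ℝ)) ≤ 1 / N := by
        rw [Real.exp_neg, one_div]
        exact inv_anti₀ hNpos h1
      linarith
    have hpowF : |F z| ^ N ≤ 1 / (δ * N) := by
      have h1δ : 1 - δ ≤ Real.exp (-δ) := by
        have := Real.add_one_le_exp (-δ); linarith
      have hstep1 : |F z| ^ N ≤ (1 - δ) ^ N :=
        pow_le_pow_left₀ (abs_nonneg _) hFr N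
      have hstep2 : (1 - δ) ^ N ≤ Real.exp (-δ) ^ N :=
        pow_le_pow_left₀ (by linarith) h1δ N
      have hstep3 : Real.exp (-δ) ^ N = Real.exp (-(δ * N)) := by
        rw [← Real.exp_nat_mul]; congr 1; ring
      have hstep4 : Real.exp (-(δ * N)) ≤ 1 / (δ * N) := by
        have h1 : δ * N ≤ Real.exp (δ * N) := by
          have := Real.add_one_le_exp (δ * N); linarith
        rw [Real.exp_neg, one_div]
        exact inv_anti₀ (by positivity) h1
      calc |F z| ^ N ≤ (1 - δ) ^ N := hstep1
        _ ≤ Real.exp (-δ) ^ N := hstep2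
        _ = Real.exp (-(δ * N)) := hstep3
        _ ≤ 1 / (δ * N) := hstep4
    have htri : |Real.exp (-(N * z)) - F z ^ N| ≤ 1 / N + 1 / (δ * N) := by
      have h1 : |Real.exp (-(N * z)) - F z ^ N| ≤ |Real.exp (-(N * z))| + |F z ^ N| :=
        abs_sub _ _
      have h2 : |Real.exp (-(N * z))| = Real.exp (-(N * z)) := abs_of_pos (Real.exp_pos _)
      have h3 : |F z ^ N| = |F z| ^ N := abs_pow _ _
      rw [h2, h3] at h1
      linarith
    have hsum : 1 / (N:ℝ) + 1 / (δ * N) ≤ (64 + 2/δ) / N := by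
      have e : 1 / (δ * (N:ℝ)) = (1/δ) / N := (div_div 1 δ (N:ℝ)).symm
      rw [e, ← add_div]
      apply (div_le_div_iff_of_pos_right hNpos).2
      have h1 : 1/δ ≤ 2/δ := (div_le_div_iff_of_pos_right hδ0).2 (by norm_num)
      linarith
    linarith
end
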